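/- For any real b with |b| < 1, the double series K_0(b) = 1 + ∑_{m=1}^∞ (-1)^m b^m ∑_{n=0}^{m-1} (-1)^n C(m-1, n) c_{4m+n+1} converges absolutely, where C(m-1,n) is the binomial coefficient and c_k is defined by c_1 = 1/5, c_{k+1} = ((5k-1)/(5(k+1))) c_k. -/
import Mathlib

open Finset

private def Ediff (c : ℕ → ℝ) (j k : ℕ) : ℝ :=
  ∑ n ∈ range (j+1), (-1 : ℝ)^n * (Nat.choose j n) * c (k+n)

lemma Ediff_succ (c : ℕ → ℝ) (j k : ℕ) :
    Ediff c (j+1) k = Ediff c j k - Ediff c j (k+1) := by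
  unfold Ediff
  rw [Finset.sum_range_succ' (fun n => (-1:ℝ)^n * (Nat.choose (j+1) n) * c (k+n))]
  have h1 : ∀ n ∈ range (j+1), (-1:ℝ)^(n+1) * (Nat.choose (j+1) (n+1)) * c (k+(n+1))
      = (-((-1:ℝ)^n * (Nat.choose j n) * c ((k+1)+n)))
        + (-((-1:ℝ)^n * (Nat.choose j (n+1)) * c (k+(n+1)))) := by
    intro n _
    have hk : k + (n+1) = (k+1) + n := by omega
    rw [Nat.choose_succ_succ, hk]
    push_cast
    ring
  rw [Finset.sum_congr rfl h1, Finset.sum_add_distrib]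
  have h2 : ∑ n ∈ range (j+1), -((-1:ℝ)^n * (Nat.choose j (n+1)) * c (k+(n+1)))
      = (∑ n ∈ range (j+1), (-1:ℝ)^n * (Nat.choose j n) * c (k+n)) - c k := by
    rw [Finset.sum_range_succ' (fun n => (-1:ℝ)^n * (Nat.choose j n) * c (k+n)),
      Finset.sum_range_succ (fun n => -((-1:ℝ)^n * (Nat.choose j (n+1)) * c (k+(n+1))))]
    simp [Nat.choose_succ_self]
    rw [← Finset.sum_neg_distrib]
    exact Finset.sum_congr rfl fun n _ => by ring
  rw [h2]
  have h3 : ∑ n ∈ range (j+1), -((-1:ℝ)^n * (Nat.choose j n) * c ((k+1)+n))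
      = -∑ n ∈ range (j+1), (-1:ℝ)^n * (Nat.choose j n) * c ((k+1)+n) := by
    rw [Finset.sum_neg_distrib]
  rw [h3]
  simp
  ring

section main
variable (c : ℕ → ℝ) (hc1 : c 1 = 1 / 5)
  (hrec : ∀ k ≥ 1, c (k + 1) = ((5 * k - 1 : ℝ) / (5 * (k + 1))) * c k)

include hc1 hrec

lemma c_pos : ∀ k, 1 ≤ k → 0 < c k := by
  intro k hk
  induction k, hk using Nat.le_induction with
  | base => rw [hc1]; norm_num
  | succ k hk ih =>
    rw [hrec k hk]
    apply mul_pos _ ih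
    apply div_pos
    · have : (1:ℝ) ≤ k := by exact_mod_cast hk
      linarith
    · positivity

lemma c_le : ∀ k, 1 ≤ k → c k ≤ 1/5 := by
  intro k hk
  induction k, hk using Nat.le_induction with
  | base => rw [hc1]
  | succ k hk ih =>
    rw [hrec k hk]
    have hck := c_pos c hc1 hrec k hk
    have h1 : (1:ℝ) ≤ k := by exact_mod_cast hk
    have hr : ((5 * k - 1 : ℝ) / (5 * (k + 1))) ≤ 1 := by
      rw [div_le_one (by positivity)]; linarith
    calc ((5 * k - 1 : ℝ) / (5 * (k + 1))) * c k ≤ 1 * c k :=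
          mul_le_mul_of_nonneg_right hr (le_of_lt hck)
      _ = c k := one_mul _
      _ ≤ 1/5 := ih

lemma Ediff_props : ∀ j : ℕ, ∀ k, 1 ≤ k → 0 ≤ Ediff c j k ∧
    Ediff c j (k+1) = ((5 * k - 1 : ℝ) / (5 * (k + j + 1))) * Ediff c j k := by
  intro j
  induction j with
  | zero =>
    intro k hk
    have e0 : ∀ m, Ediff c 0 m = c m := by
      intro m; unfold Ediff; simp
    constructor
    · rw [e0]; exact le_of_lt (c_pos c hc1 hrec k hk)
    · rw [e0, e0, hrec k hk]; norm_num
  | succ j ih =>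
    intro k hk
    obtain ⟨hpos, hrat⟩ := ih k hk
    obtain ⟨hpos', hrat'⟩ := ih (k+1) (by omega)
    have hkr : (1:ℝ) ≤ k := by exact_mod_cast hk
    constructor
    · rw [Ediff_succ, hrat]
      have : Ediff c j k - (5 * k - 1 : ℝ) / (5 * (k + j + 1)) * Ediff c j k
          = ((5 * (j:ℝ) + 6) / (5 * (k + j + 1))) * Ediff c j k := by
        have hd1 : (5 * ((k:ℝ) + j + 1)) ≠ 0 := by positivity
        field_simp; ring
      rw [this]
      exact mul_nonneg (div_nonneg (by positivity) (by positivity)) hpos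
    · rw [Ediff_succ, Ediff_succ, hrat, hrat', hrat]
      push_cast
      have hd1 : (5 * ((k:ℝ) + j + 1)) ≠ 0 := by positivity
      have hd2 : (5 * ((k:ℝ) + 1 + j + 1)) ≠ 0 := by positivity
      field_simp
      ring

lemma Ediff_le : ∀ j : ℕ, ∀ k, 1 ≤ k → Ediff c j k ≤ c k := by
  intro j
  induction j with
  | zero => intro k hk; unfold Ediff; simp
  | succ j ih =>
    intro k hk
    rw [Ediff_succ]
    have h := (Ediff_props c hc1 hrec j (k+1) (by omega)).1
    linarith [ih k hk]

end main

theorem K0_double_series_abs_convergent (c : ℕ → ℝ) (hc1 : c 1 = 1 / 5)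
    (hrec : ∀ k ≥ 1, c (k + 1) = ((5 * k - 1 : ℝ) / (5 * (k + 1))) * c k)
    (b : ℝ) (hb : |b| < 1) :
    Summable (fun m : ℕ =>
      |(-1 : ℝ) ^ (m + 1) * b ^ (m + 1) *
        ∑ n ∈ Finset.range (m + 1),
          (-1 : ℝ) ^ n * (Nat.choose m n) * c (4 * (m + 1) + n + 1)|) := by
  have hsum : Summable (fun m : ℕ => (1/5 : ℝ) * |b| ^ (m + 1)) := by
    have := (summable_geometric_of_lt_one (abs_nonneg b) hb).mul_left (|b| / 5)
    refine this.congr fun m => ?_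
    rw [pow_succ]
    ring
  apply Summable.of_nonneg_of_le (fun m => abs_nonneg _) _ hsum
  intro m
  have hE : (∑ n ∈ Finset.range (m + 1),
      (-1 : ℝ) ^ n * (Nat.choose m n) * c (4 * (m + 1) + n + 1)) = Ediff c m (4*m+5) := by
    unfold Ediff
    apply Finset.sum_congr rfl
    intro n _
    congr 2
    omega
  have h1 := (Ediff_props c hc1 hrec m (4*m+5) (by omega)).1
  have h2 := Ediff_le c hc1 hrec m (4*m+5) (by omega)
  have h3 := c_le c hc1 hrec (4*m+5) (by omega)
  rw [hE, abs_mul, abs_mul, abs_pow, abs_pow, abs_neg, abs_one, one_pow, one_mul,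
    abs_of_nonneg h1]
  calc |b| ^ (m+1) * Ediff c m (4*m+5) ≤ |b| ^ (m+1) * (1/5) := by
        apply mul_le_mul_of_nonneg_left (le_trans h2 h3) (by positivity)
    _ = 1/5 * |b| ^ (m+1) := by ring
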